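/- arXiv:1410.1050 — 2 statements merged into one kernel-verified Lean document; each statement's English description precedes it below -/
import Mathlib

section
/- Let μ and ν be Borel probability measures on the real line with finite first moments, having cumulative distribution functions F and G respectively. Then the Kantorovich-Rubinstein (Wasserstein-1) distance between μ and ν equals the integral over the real line of |F(x) - G(x)| dx. -/
open MeasureTheory ProbabilityTheory Set Filter Topology
open scoped ENNReal

lemma ne_set_eq (a b : ℝ) : {x : ℝ | (a ≤ x) ≠ (b ≤ x)} = Ico (min a b) (max a b) := by
  ext x
  simp only [mem_setOf_eq, mem_Ico, ← not_le, min_le_iff, max_le_iff, ne_eq, eq_iff_iff]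
  tauto

lemma vol_ne_set (a b : ℝ) : volume {x : ℝ | (a ≤ x) ≠ (b ≤ x)} = ENNReal.ofReal |a - b| := by
  rw [ne_set_eq, Real.volume_Ico]
  congr 1
  rcases le_total a b with h | h <;>
    simp [min_eq_left, min_eq_right, max_eq_left, max_eq_right, h, abs_of_nonneg, abs_of_nonpos,
      sub_nonneg, sub_nonpos] <;> rw [abs_of_nonpos (by linarith)] <;> ring

lemma ne_set_eq2 (a b : ℝ) : {t : ℝ | (t ≤ a) ≠ (t ≤ b)} = Ioc (min a b) (max a b) := by
  ext t
  simp only [mem_setOf_eq, mem_Ioc, ← not_le, le_min_iff, le_max_iff, ne_eq, eq_iff_iff]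
  tauto

lemma vol_ne_set2 (a b : ℝ) (ha0 : 0 ≤ a) (ha1 : a ≤ 1) (hb0 : 0 ≤ b) (hb1 : b ≤ 1) :
    volume (Ioo (0:ℝ) 1 ∩ {t : ℝ | (t ≤ a) ≠ (t ≤ b)}) = ENNReal.ofReal |a - b| := by
  have habs : ENNReal.ofReal (max a b - min a b) = ENNReal.ofReal |a - b| := by
    congr 1
    rcases le_total a b with h | h <;>
      simp [min_eq_left, min_eq_right, max_eq_left, max_eq_right, h, abs_of_nonneg,
        sub_nonneg] <;> rw [abs_of_nonpos (by linarith)] <;> ring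
  rw [ne_set_eq2]
  apply le_antisymm
  · refine le_trans (measure_mono inter_subset_right) ?_
    rw [Real.volume_Ioc, habs]
  · refine le_trans (le_of_eq ?_) (measure_mono (?_ : Ioo (min a b) (max a b) ⊆ _))
    · rw [Real.volume_Ioo, habs]
    · intro t ht
      simp only [mem_Ioo] at ht
      exact ⟨⟨lt_of_le_of_lt (le_min ha0 hb0) ht.1, lt_of_lt_of_le ht.2 (max_le ha1 hb1)⟩,
        ht.1, ht.2.le⟩

noncomputable def qtl (μ : Measure ℝ) (t : ℝ) : ℝ := sInf {x | t ≤ cdf μ x}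

section qtl
variable (μ : Measure ℝ) [IsProbabilityMeasure μ] {t : ℝ}

lemma qtl_set_nonempty (ht : t < 1) : {x | t ≤ cdf μ x}.Nonempty := by
  obtain ⟨x, hx⟩ := ((tendsto_cdf_atTop μ).eventually_const_le ht).exists
  exact ⟨x, hx⟩

lemma qtl_set_bddBelow (ht : 0 < t) : BddBelow {x | t ≤ cdf μ x} := by
  obtain ⟨x₀, hx₀⟩ := ((tendsto_cdf_atBot μ).eventually_lt_const ht).exists
  refine ⟨x₀, fun y hy => ?_⟩
  by_contra h
  push_neg at h
  exact absurd (le_trans hy (monotone_cdf μ h.le)) (not_le.2 hx₀)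

lemma le_cdf_qtl (ht : t ∈ Set.Ioo (0:ℝ) 1) : t ≤ cdf μ (qtl μ t) := by
  have key : ∀ y ∈ Set.Ioi (qtl μ t), t ≤ cdf μ y := by
    intro y hy
    obtain ⟨z, hz, hzy⟩ := (csInf_lt_iff (qtl_set_bddBelow μ ht.1) (qtl_set_nonempty μ ht.2)).mp hy
    exact le_trans hz (monotone_cdf μ hzy.le)
  have htd : Tendsto (cdf μ) (𝓝[>] (qtl μ t)) (𝓝 (cdf μ (qtl μ t))) :=
    ((cdf μ).right_continuous (qtl μ t)).mono Set.Ioi_subset_Ici_self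
  exact ge_of_tendsto htd (eventually_nhdsWithin_of_forall key)

lemma qtl_le_iff (ht : t ∈ Set.Ioo (0:ℝ) 1) {x : ℝ} : qtl μ t ≤ x ↔ t ≤ cdf μ x := by
  constructor
  · intro h
    exact le_trans (le_cdf_qtl μ ht) (monotone_cdf μ h)
  · intro h
    exact csInf_le (qtl_set_bddBelow μ ht.1) h

lemma monotoneOn_qtl : MonotoneOn (qtl μ) (Set.Ioo (0:ℝ) 1) := by
  intro s hs u hu hsu
  exact csInf_le_csInf (qtl_set_bddBelow μ hs.1) (qtl_set_nonempty μ hu.2)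
    (fun x hx => le_trans hsu hx)

lemma aemeasurable_qtl : AEMeasurable (qtl μ) (volume.restrict (Set.Ioo (0:ℝ) 1)) :=
  aemeasurable_restrict_of_monotoneOn measurableSet_Ioo (monotoneOn_qtl μ)

lemma map_qtl : (volume.restrict (Set.Ioo (0:ℝ) 1)).map (qtl μ) = μ := by
  have hP : IsProbabilityMeasure (volume.restrict (Set.Ioo (0:ℝ) 1)) :=
    ⟨by simp [Real.volume_Ioo]⟩
  have : IsProbabilityMeasure ((volume.restrict (Set.Ioo (0:ℝ) 1)).map (qtl μ)) :=
    Measure.isProbabilityMeasure_map (aemeasurable_qtl μ)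
  refine Measure.ext_of_Iic _ _ (fun x => ?_)
  rw [Measure.map_apply_of_aemeasurable (aemeasurable_qtl μ) measurableSet_Iic]
  rw [Measure.restrict_apply₀' measurableSet_Ioo.nullMeasurableSet]
  have hset : qtl μ ⁻¹' Set.Iic x ∩ Set.Ioo 0 1 = Set.Iic (cdf μ x) ∩ Set.Ioo 0 1 := by
    ext t
    simp only [Set.mem_inter_iff, Set.mem_preimage, Set.mem_Iic, and_congr_left_iff]
    intro hti
    exact qtl_le_iff μ hti
  rw [hset, ← ofReal_cdf μ x]
  have h0 : (0:ℝ) ≤ cdf μ x := cdf_nonneg μ x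
  have h1 : cdf μ x ≤ 1 := cdf_le_one μ x
  apply le_antisymm
  · refine le_trans (measure_mono (?_ : _ ⊆ Set.Ioc 0 (cdf μ x))) ?_
    · rintro t ⟨h2, h3, _⟩; exact ⟨h3, h2⟩
    · rw [Real.volume_Ioc]; simp
  · refine le_trans (le_of_eq ?_) (measure_mono (?_ : Set.Ioo 0 (cdf μ x) ⊆ _))
    · rw [Real.volume_Ioo]; simp
    · rintro t ⟨h2, h3⟩
      exact ⟨h3.le, h2, lt_of_lt_of_le h3 h1⟩

end qtl

-- assume previous lemmas available; re-declare as axioms for quick check? no, just paste later.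
section test
variable (μ ν : Measure ℝ) [IsProbabilityMeasure μ] [IsProbabilityMeasure ν]

lemma measurable_ne_prod :
    MeasurableSet {p : ℝ × ℝ | (p.1 ≤ cdf μ p.2) ≠ (p.1 ≤ cdf ν p.2)} := by
  have h1 : MeasurableSet {p : ℝ × ℝ | p.1 ≤ cdf μ p.2} :=
    measurableSet_le measurable_fst ((monotone_cdf μ).measurable.comp measurable_snd)
  have h2 : MeasurableSet {p : ℝ × ℝ | p.1 ≤ cdf ν p.2} :=
    measurableSet_le measurable_fst ((monotone_cdf ν).measurable.comp measurable_snd)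
  have : {p : ℝ × ℝ | (p.1 ≤ cdf μ p.2) ≠ (p.1 ≤ cdf ν p.2)} =
      ({p : ℝ × ℝ | p.1 ≤ cdf μ p.2} \ {p : ℝ × ℝ | p.1 ≤ cdf ν p.2}) ∪
      ({p : ℝ × ℝ | p.1 ≤ cdf ν p.2} \ {p : ℝ × ℝ | p.1 ≤ cdf μ p.2}) := by
    ext p
    simp only [mem_setOf_eq, ne_eq, eq_iff_iff, mem_union, mem_diff, mem_setOf_eq]
    tauto
  rw [this]
  exact (h1.diff h2).union (h2.diff h1)

lemma measurable_ne_prod' :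
    MeasurableSet {q : (ℝ × ℝ) × ℝ | (q.1.1 ≤ q.2) ≠ (q.1.2 ≤ q.2)} := by
  have h1 : MeasurableSet {q : (ℝ × ℝ) × ℝ | q.1.1 ≤ q.2} :=
    measurableSet_le (measurable_fst.comp measurable_fst) measurable_snd
  have h2 : MeasurableSet {q : (ℝ × ℝ) × ℝ | q.1.2 ≤ q.2} :=
    measurableSet_le (measurable_snd.comp measurable_fst) measurable_snd
  have : {q : (ℝ × ℝ) × ℝ | (q.1.1 ≤ q.2) ≠ (q.1.2 ≤ q.2)} =
      ({q : (ℝ × ℝ) × ℝ | q.1.1 ≤ q.2} \ {q : (ℝ × ℝ) × ℝ | q.1.2 ≤ q.2}) ∪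
      ({q : (ℝ × ℝ) × ℝ | q.1.2 ≤ q.2} \ {q : (ℝ × ℝ) × ℝ | q.1.1 ≤ q.2}) := by
    ext q
    simp only [mem_setOf_eq, ne_eq, eq_iff_iff, mem_union, mem_diff, mem_setOf_eq]
    tauto
  rw [this]
  exact (h1.diff h2).union (h2.diff h1)

end test

section main
variable (μ ν : Measure ℝ) [IsProbabilityMeasure μ] [IsProbabilityMeasure ν]

lemma cost_eq :
    ∫⁻ t in Set.Ioo (0:ℝ) 1, ENNReal.ofReal |qtl μ t - qtl ν t|
      = ∫⁻ x, ENNReal.ofReal |cdf μ x - cdf ν x| := by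
  set A : Set (ℝ × ℝ) := {p : ℝ × ℝ | (p.1 ≤ cdf μ p.2) ≠ (p.1 ≤ cdf ν p.2)} with hA
  have hAm : MeasurableSet A := measurable_ne_prod μ ν
  have step1 : ∫⁻ t in Set.Ioo (0:ℝ) 1, ENNReal.ofReal |qtl μ t - qtl ν t|
      = ∫⁻ t in Set.Ioo (0:ℝ) 1, volume (Prod.mk t ⁻¹' A) := by
    refine setLIntegral_congr_fun measurableSet_Ioo (fun t ht => ?_)
    have hpre : Prod.mk t ⁻¹' A = {x : ℝ | (qtl μ t ≤ x) ≠ (qtl ν t ≤ x)} := by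
      ext x
      simp only [hA, mem_preimage, mem_setOf_eq, ne_eq, eq_iff_iff]
      rw [qtl_le_iff μ ht, qtl_le_iff ν ht]
    rw [hpre, vol_ne_set]
  have step2 : ∫⁻ t in Set.Ioo (0:ℝ) 1, volume (Prod.mk t ⁻¹' A)
      = ((volume.restrict (Set.Ioo (0:ℝ) 1)).prod volume) A :=
    (Measure.prod_apply hAm).symm
  have step3 : ((volume.restrict (Set.Ioo (0:ℝ) 1)).prod volume) A
      = ∫⁻ x, (volume.restrict (Set.Ioo (0:ℝ) 1)) ((fun t => (t, x)) ⁻¹' A) :=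
    Measure.prod_apply_symm hAm
  have step4 : ∀ x : ℝ, (volume.restrict (Set.Ioo (0:ℝ) 1)) ((fun t => (t, x)) ⁻¹' A)
      = ENNReal.ofReal |cdf μ x - cdf ν x| := by
    intro x
    have hpre : (fun t => (t, x)) ⁻¹' A = {t : ℝ | (t ≤ cdf μ x) ≠ (t ≤ cdf ν x)} := rfl
    have hms : MeasurableSet {t : ℝ | (t ≤ cdf μ x) ≠ (t ≤ cdf ν x)} := by
      rw [ne_set_eq2]; exact measurableSet_Ioc
    rw [hpre, Measure.restrict_apply hms, inter_comm]
    exact vol_ne_set2 _ _ (cdf_nonneg μ x) (cdf_le_one μ x) (cdf_nonneg ν x) (cdf_le_one ν x)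
  rw [step1, step2, step3]
  exact lintegral_congr step4

lemma wass_lb (π : Measure (ℝ × ℝ)) [IsProbabilityMeasure π]
    (h1 : π.map Prod.fst = μ) (h2 : π.map Prod.snd = ν) :
    ∫⁻ x, ENNReal.ofReal |cdf μ x - cdf ν x| ≤ ∫⁻ p, ENNReal.ofReal |p.1 - p.2| ∂π := by
  set C : Set ((ℝ × ℝ) × ℝ) := {q | (q.1.1 ≤ q.2) ≠ (q.1.2 ≤ q.2)} with hC
  have hCm : MeasurableSet C := measurable_ne_prod'
  have key : ∀ x : ℝ, ENNReal.ofReal |cdf μ x - cdf ν x| ≤ π ((fun p => (p, x)) ⁻¹' C) := by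
    intro x
    set U : Set (ℝ × ℝ) := Prod.fst ⁻¹' Set.Iic x with hU
    set V : Set (ℝ × ℝ) := Prod.snd ⁻¹' Set.Iic x with hV
    have hUm : MeasurableSet U := measurable_fst measurableSet_Iic
    have hVm : MeasurableSet V := measurable_snd measurableSet_Iic
    have hpre : (fun p => (p, x)) ⁻¹' C = (U \ V) ∪ (V \ U) := by
      ext p
      simp only [hC, hU, hV, mem_preimage, mem_setOf_eq, ne_eq, eq_iff_iff, mem_union,
        mem_diff, mem_preimage, Set.mem_Iic]
      tauto
    have hFU : cdf μ x = (π U).toReal := by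
      rw [cdf_eq_real, measureReal_def, ← h1, Measure.map_apply measurable_fst measurableSet_Iic]
    have hGV : cdf ν x = (π V).toReal := by
      rw [cdf_eq_real, measureReal_def, ← h2, Measure.map_apply measurable_snd measurableSet_Iic]
    have ha : π (U \ V) ≠ ⊤ := measure_ne_top _ _
    have hb : π (V \ U) ≠ ⊤ := measure_ne_top _ _
    have hc : π (U ∩ V) ≠ ⊤ := measure_ne_top _ _
    have hUsplit : (π U).toReal = (π (U \ V)).toReal + (π (U ∩ V)).toReal := by
      rw [← ENNReal.toReal_add ha hc, measure_diff_add_inter U hVm]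
    have hVsplit : (π V).toReal = (π (V \ U)).toReal + (π (V ∩ U)).toReal := by
      rw [← ENNReal.toReal_add hb (by rw [inter_comm]; exact hc),
        measure_diff_add_inter V hUm]
    have habs : |cdf μ x - cdf ν x| ≤ (π (U \ V)).toReal + (π (V \ U)).toReal := by
      rw [hFU, hGV, hUsplit, hVsplit, inter_comm]
      have h1' := ENNReal.toReal_nonneg (a := π (U \ V))
      have h2' := ENNReal.toReal_nonneg (a := π (V \ U))
      rw [abs_le]
      constructor <;> linarith
    have hunion : (π (U \ V)).toReal + (π (V \ U)).toReal = (π ((U \ V) ∪ (V \ U))).toReal := by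
      rw [measure_union (disjoint_sdiff_sdiff) (hVm.diff hUm), ENNReal.toReal_add ha hb]
    rw [hpre]
    exact ENNReal.ofReal_le_of_le_toReal (by rw [← hunion]; exact habs)
  calc ∫⁻ x, ENNReal.ofReal |cdf μ x - cdf ν x|
      ≤ ∫⁻ x, π ((fun p => (p, x)) ⁻¹' C) := lintegral_mono key
    _ = (π.prod volume) C := (Measure.prod_apply_symm hCm).symm
    _ = ∫⁻ p, volume (Prod.mk p ⁻¹' C) ∂π := Measure.prod_apply hCm
    _ = ∫⁻ p, ENNReal.ofReal |p.1 - p.2| ∂π := by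
        refine lintegral_congr fun p => ?_
        have : Prod.mk p ⁻¹' C = {x : ℝ | (p.1 ≤ x) ≠ (p.2 ≤ x)} := rfl
        rw [this, vol_ne_set]

end main

theorem stmt_6 (μ ν : Measure ℝ) [IsProbabilityMeasure μ] [IsProbabilityMeasure ν]
    (hμ : Integrable (fun x => x) μ) (hν : Integrable (fun x => x) ν) :
    sInf {r : ℝ | ∃ π : Measure (ℝ × ℝ), IsProbabilityMeasure π ∧
        π.map Prod.fst = μ ∧ π.map Prod.snd = ν ∧
        r = ∫ p, |p.1 - p.2| ∂π}
      = ∫ x, |cdf μ x - cdf ν x| := by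
  set S := {r : ℝ | ∃ π : Measure (ℝ × ℝ), IsProbabilityMeasure π ∧
      π.map Prod.fst = μ ∧ π.map Prod.snd = ν ∧ r = ∫ p, |p.1 - p.2| ∂π} with hS
  set L : ℝ≥0∞ := ∫⁻ x, ENNReal.ofReal |cdf μ x - cdf ν x| with hLdef
  -- any coupling has integrable cost, and its cost is ≥ L
  have hInt : ∀ π : Measure (ℝ × ℝ), IsProbabilityMeasure π → π.map Prod.fst = μ →
      π.map Prod.snd = ν → Integrable (fun p : ℝ × ℝ => |p.1 - p.2|) π := by
    intro π hπ hπ1 hπ2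
    have hf : Integrable (fun p : ℝ × ℝ => p.1) π := by
      have h : Integrable (fun x : ℝ => x) (π.map Prod.fst) := hπ1 ▸ hμ
      exact (integrable_map_measure aestronglyMeasurable_id
        measurable_fst.aemeasurable).mp h
    have hg : Integrable (fun p : ℝ × ℝ => p.2) π := by
      have h : Integrable (fun x : ℝ => x) (π.map Prod.snd) := hπ2 ▸ hν
      exact (integrable_map_measure aestronglyMeasurable_id
        measurable_snd.aemeasurable).mp h
    exact (hf.sub hg).abs
  have hcost_eq_lint : ∀ π : Measure (ℝ × ℝ), IsProbabilityMeasure π →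
      Integrable (fun p : ℝ × ℝ => |p.1 - p.2|) π →
      ∫ p, |p.1 - p.2| ∂π = (∫⁻ p, ENNReal.ofReal |p.1 - p.2| ∂π).toReal ∧
        ∫⁻ p, ENNReal.ofReal |p.1 - p.2| ∂π ≠ ⊤ := by
    intro π hπ hint
    constructor
    · exact integral_eq_lintegral_of_nonneg_ae (ae_of_all _ fun p => abs_nonneg _)
        hint.aestronglyMeasurable
    · have := hint.2
      simp only [HasFiniteIntegral] at this
      simp only [Real.enorm_eq_ofReal_abs, abs_abs] at this
      exact this.ne
  -- L is finite (via product coupling)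
  have hLfin : L ≠ ⊤ := by
    have hprod1 : (μ.prod ν).map Prod.fst = μ := by
      rw [Measure.map_fst_prod]; simp
    have hprod2 : (μ.prod ν).map Prod.snd = ν := by
      rw [Measure.map_snd_prod]; simp
    have hint := hInt (μ.prod ν) inferInstance hprod1 hprod2
    have hle := wass_lb μ ν (μ.prod ν) hprod1 hprod2
    exact ne_top_of_le_ne_top ((hcost_eq_lint (μ.prod ν) inferInstance hint).2) hle
  -- abs cdf diff measurable & c = L.toReal
  have hFGmeas : AEStronglyMeasurable (fun x : ℝ => |cdf μ x - cdf ν x|) volume :=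
    (((monotone_cdf μ).measurable.sub (monotone_cdf ν).measurable).abs).aestronglyMeasurable
  have hc : ∫ x, |cdf μ x - cdf ν x| = L.toReal := by
    rw [hLdef, integral_eq_lintegral_of_nonneg_ae (ae_of_all _ fun x => abs_nonneg _) hFGmeas]
  -- the quantile coupling
  set P : Measure ℝ := volume.restrict (Set.Ioo (0:ℝ) 1) with hPdef
  have hP : IsProbabilityMeasure P := ⟨by rw [hPdef, Measure.restrict_apply_univ, Real.volume_Ioo]; norm_num⟩
  have hQae : AEMeasurable (fun t => (qtl μ t, qtl ν t)) P :=
    (aemeasurable_qtl μ).prodMk (aemeasurable_qtl ν)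
  set πQ : Measure (ℝ × ℝ) := P.map (fun t => (qtl μ t, qtl ν t)) with hπQdef
  have hπQprob : IsProbabilityMeasure πQ := Measure.isProbabilityMeasure_map hQae
  have hπQ1 : πQ.map Prod.fst = μ := by
    rw [hπQdef, AEMeasurable.map_map_of_aemeasurable measurable_fst.aemeasurable hQae]
    exact map_qtl μ
  have hπQ2 : πQ.map Prod.snd = ν := by
    rw [hπQdef, AEMeasurable.map_map_of_aemeasurable measurable_snd.aemeasurable hQae]
    exact map_qtl ν
  have hmem : L.toReal ∈ S := by
    refine ⟨πQ, hπQprob, hπQ1, hπQ2, ?_⟩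
    have h1 : ∫ p, |p.1 - p.2| ∂πQ = ∫ t, |qtl μ t - qtl ν t| ∂P := by
      rw [hπQdef, integral_map hQae]
      exact (continuous_fst.sub continuous_snd).abs.aestronglyMeasurable
    have h2 : ∫ t, |qtl μ t - qtl ν t| ∂P
        = (∫⁻ t, ENNReal.ofReal |qtl μ t - qtl ν t| ∂P).toReal := by
      refine integral_eq_lintegral_of_nonneg_ae (ae_of_all _ fun t => abs_nonneg _) ?_
      exact (measurable_abs.comp_aemeasurable ((aemeasurable_qtl μ).sub (aemeasurable_qtl ν))).aestronglyMeasurable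
    rw [h1, h2, hPdef]
    rw [cost_eq μ ν]
  have hlb : ∀ r ∈ S, L.toReal ≤ r := by
    rintro r ⟨π, hπ, hπ1, hπ2, hr⟩
    have hint := hInt π hπ hπ1 hπ2
    obtain ⟨heq, hfin⟩ := hcost_eq_lint π hπ hint
    rw [hr, heq]
    exact ENNReal.toReal_mono hfin (wass_lb μ ν π hπ1 hπ2)
  rw [hc]
  exact le_antisymm (csInf_le ⟨L.toReal, hlb⟩ hmem) (le_csInf ⟨L.toReal, hmem⟩ hlb)
end

section
/- Let (D_i)_{i≥1} be i.i.d. nonnegative-integer-valued random variables with E[D^{2+ε}] < ∞ for some ε > 0, and let F_n(k) = (1/n)Σ_{i=1}^n 1(D_i ≤ k) be the empirical CDF and F(k) = P(D ≤ k). Then for every 0 < δ' < 1/2, n^{δ'} · Σ_{k=0}^∞ |F_n(k) - F(k)| converges to 0 in probability as n → ∞. -/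
open MeasureTheory Filter Topology ProbabilityTheory
open scoped ENNReal NNReal

lemma aux_tsum_toReal {f : ℕ → ℝ} (h : ∀ k, 0 ≤ f k) :
    ∑' k, f k = (∑' k, ENNReal.ofReal (f k)).toReal := by
  by_cases hs : Summable f
  · rw [← ENNReal.ofReal_tsum_of_nonneg h hs, ENNReal.toReal_ofReal (tsum_nonneg h)]
  · rw [tsum_eq_zero_of_not_summable hs]
    have htop : (∑' k, ENNReal.ofReal (f k)) = ⊤ := by
      by_contra hne
      apply hs
      have h1 : Summable fun k => (f k).toNNReal := by
        rw [← ENNReal.tsum_coe_ne_top_iff_summable]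
        simpa [ENNReal.ofReal] using hne
      exact (NNReal.summable_coe.mpr h1).congr fun k => Real.coe_toNNReal _ (h k)
    rw [htop, ENNReal.toReal_top]

lemma aux_ofReal_tsum_le (f : ℕ → ℝ) (h : ∀ k, 0 ≤ f k) :
    ENNReal.ofReal (∑' k, f k) ≤ ∑' k, ENNReal.ofReal (f k) := by
  by_cases hs : Summable f
  · rw [ENNReal.ofReal_tsum_of_nonneg h hs]
  · rw [tsum_eq_zero_of_not_summable hs]
    simp

lemma aux_cs {Ω : Type*} [MeasurableSpace Ω] (P : Measure Ω) [IsProbabilityMeasure P]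
    (f : Ω → ℝ) (hf : Measurable f) :
    ∫⁻ ω, ENNReal.ofReal |f ω| ∂P ≤ (∫⁻ ω, ENNReal.ofReal (f ω ^ 2) ∂P) ^ (1/2 : ℝ) := by
  have hpq : Real.HolderConjugate 2 2 := Real.HolderConjugate.two_two
  have hmf : AEMeasurable (fun ω => ENNReal.ofReal |f ω|) P :=
    (ENNReal.measurable_ofReal.comp hf.abs).aemeasurable
  have h := ENNReal.lintegral_mul_le_Lp_mul_Lq P hpq (g := fun _ => (1 : ℝ≥0∞)) hmf
    aemeasurable_const
  simp only [Pi.mul_apply, mul_one, ENNReal.one_rpow, lintegral_const,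
    measure_univ, one_mul] at h
  calc ∫⁻ ω, ENNReal.ofReal |f ω| ∂P
      ≤ (∫⁻ ω, (ENNReal.ofReal |f ω|) ^ (2:ℝ) ∂P) ^ (1/2 : ℝ) := by
        simpa using h
    _ = (∫⁻ ω, ENNReal.ofReal (f ω ^ 2) ∂P) ^ (1/2 : ℝ) := by
        congr 1
        apply lintegral_congr fun ω => ?_
        rw [ENNReal.ofReal_rpow_of_nonneg (abs_nonneg _) (by norm_num), Real.rpow_two, sq_abs]

theorem stmt_12 {Ω : Type*} [MeasurableSpace Ω] (P : Measure Ω) [IsProbabilityMeasure P]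
    (D : ℕ → Ω → ℕ) (hmeas : ∀ i, Measurable (D i))
    (hindep : iIndepFun D P)
    (hident : ∀ i, Measure.map (D i) P = Measure.map (D 0) P)
    (ε : ℝ) (hε : 0 < ε)
    (hmom : Integrable (fun ω => (D 0 ω : ℝ) ^ (2 + ε)) P)
    (δ' : ℝ) (hδ'pos : 0 < δ') (hδ'lt : δ' < 1 / 2) :
    TendstoInMeasure P
      (fun (n : ℕ) (ω : Ω) => (n : ℝ) ^ δ' *
        ∑' k : ℕ, |(1 / (n : ℝ)) * ∑ i ∈ Finset.range n,
            (if D i ω ≤ k then (1 : ℝ) else 0) - (P {ω' | D 0 ω' ≤ k}).toReal|)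
      atTop (fun _ => 0) := by
  classical
  set p : ℕ → ℝ := fun k => (P {ω' | D 0 ω' ≤ k}).toReal with hpdef
  set X : ℕ → ℕ → Ω → ℝ := fun i k ω => if D i ω ≤ k then (1:ℝ) else 0 with hXdef
  have hp0 : ∀ k, 0 ≤ p k := fun k => ENNReal.toReal_nonneg
  have hp1 : ∀ k, p k ≤ 1 := fun k => by
    simpa [p] using ENNReal.toReal_le_of_le_ofReal zero_le_one
      (by simpa using prob_le_one (μ := P) (s := {ω' | D 0 ω' ≤ k}))
  set q : ℕ → ℝ := fun k => 1 - p k with hqdef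
  have hq0 : ∀ k, 0 ≤ q k := fun k => by simp [q, hp1 k]
  -- measurability of indicators
  have hXmeas : ∀ i k, Measurable (X i k) := by
    intro i k
    exact (measurable_from_top (f := fun m : ℕ => if m ≤ k then (1:ℝ) else 0)).comp (hmeas i)
  have hXbd : ∀ i k ω, X i k ω ∈ Set.Icc (0:ℝ) 1 := by
    intro i k ω
    by_cases h : D i ω ≤ k <;> simp [X, h]
  have hXmem : ∀ i k, MemLp (X i k) 2 P := by
    intro i k
    refine MemLp.of_bound (hXmeas i k).aestronglyMeasurable 1 (ae_of_all _ fun ω => ?_)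
    have := hXbd i k ω
    rw [Real.norm_eq_abs, abs_le]
    constructor <;> [linarith [this.1]; exact this.2]
  -- identical distribution: mean of each indicator is p k
  have hmap : ∀ i k, P {ω | D i ω ≤ k} = P {ω' | D 0 ω' ≤ k} := by
    intro i k
    have h1 : {ω | D i ω ≤ k} = D i ⁻¹' (Set.Iic k) := rfl
    have hs : MeasurableSet (Set.Iic k : Set ℕ) := MeasurableSet.of_discrete
    rw [h1, ← Measure.map_apply (hmeas i) hs, hident i, Measure.map_apply (hmeas 0) hs]
    rfl
  have hXint : ∀ i k, ∫ ω, X i k ω ∂P = p k := by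
    intro i k
    have h1 : (fun ω => X i k ω) = ({ω | D i ω ≤ k} : Set Ω).indicator 1 := by
      funext ω
      by_cases h : D i ω ≤ k <;> simp [X, h, Set.indicator_apply]
    rw [h1]
    have hms : MeasurableSet {ω | D i ω ≤ k} :=
      (hmeas i) (MeasurableSet.of_discrete (s := {m : ℕ | m ≤ k}))
    have h2 : ∫ ω, ({ω | D i ω ≤ k} : Set Ω).indicator 1 ω ∂P = (P {ω | D i ω ≤ k}).toReal :=
      integral_indicator_one hms
    exact h2.trans (by rw [hmap i k])
  -- variance bound
  have hvar : ∀ i k, variance (X i k) P ≤ q k := by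
    intro i k
    have h := variance_le_sub_mul_sub (μ := P) (a := 0) (b := 1)
      (ae_of_all _ fun ω => hXbd i k ω) (hXmeas i k).aemeasurable
    rw [hXint i k] at h
    have hqk : q k = 1 - p k := rfl
    nlinarith [hp0 k, hp1 k]
  -- independence of indicators
  have hpind : ∀ k, ∀ (s : Finset ℕ), (↑s : Set ℕ).Pairwise
      fun i j => IndepFun (X i k) (X j k) P := by
    intro k s i _ j _ hij
    exact (hindep.indepFun hij).comp
      (measurable_from_top (f := fun m : ℕ => if m ≤ k then (1:ℝ) else 0))
      (measurable_from_top (f := fun m : ℕ => if m ≤ k then (1:ℝ) else 0))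
  -- variance of the sum
  have hvarsum : ∀ n k, variance (∑ i ∈ Finset.range n, X i k) P ≤ (n : ℝ) * q k := by
    intro n k
    rw [IndepFun.variance_sum (fun i _ => hXmem i k) (hpind k _)]
    calc ∑ i ∈ Finset.range n, variance (X i k) P
        ≤ ∑ _i ∈ Finset.range n, q k := Finset.sum_le_sum fun i _ => hvar i k
      _ = (n : ℝ) * q k := by simp [mul_comm]
  -- mean of the sum
  have hsum_mean : ∀ n k, ∫ ω, (∑ i ∈ Finset.range n, X i k) ω ∂P = (n : ℝ) * p k := by
    intro n k
    simp only [Finset.sum_apply]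
    rw [integral_finset_sum _ (fun i _ => ((hXmem i k).integrable one_le_two))]
    simp [hXint, mul_comm]
  -- key per-k bound
  have hkey : ∀ n : ℕ, 1 ≤ n → ∀ k,
      (∫⁻ ω, ENNReal.ofReal |(1 / (n : ℝ)) * ∑ i ∈ Finset.range n, X i k ω - p k| ∂P)
        ≤ ENNReal.ofReal ((1/(n:ℝ)) * (Real.sqrt n * Real.sqrt (q k))) := by
    intro n hn k
    have hn0 : (0:ℝ) < n := by exact_mod_cast hn
    set S : Ω → ℝ := ∑ i ∈ Finset.range n, X i k with hSdef
    have hSapp : ∀ ω, S ω = ∑ i ∈ Finset.range n, X i k ω := fun ω => by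
      simp [hSdef, Finset.sum_apply]
    have hSmem : MemLp S 2 P := memLp_finsetSum' _ fun i _ => hXmem i k
    have hSmeas : Measurable S := by
      rw [show S = fun ω => ∑ i ∈ Finset.range n, X i k ω from funext hSapp]
      exact Finset.measurable_sum _ fun i _ => hXmeas i k
    set T : Ω → ℝ := fun ω => S ω - (n : ℝ) * p k with hTdef
    have hTmeas : Measurable T := hSmeas.sub measurable_const
    have hTmem : MemLp T 2 P := hSmem.sub (memLp_const _)
    have hrw : ∀ ω, |(1 / (n : ℝ)) * ∑ i ∈ Finset.range n, X i k ω - p k|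
        = (1/(n:ℝ)) * |T ω| := by
      intro ω
      have h1 : (1/(n:ℝ)) * ∑ i ∈ Finset.range n, X i k ω - p k = (1/(n:ℝ)) * T ω := by
        show _ = (1/(n:ℝ)) * (S ω - (n:ℝ) * p k)
        rw [hSapp ω, mul_sub]
        congr 1
        rw [← mul_assoc, one_div, inv_mul_cancel₀ (ne_of_gt hn0), one_mul]
      rw [h1, abs_mul, abs_of_pos (show (0:ℝ) < 1/(n:ℝ) by positivity)]
    calc (∫⁻ ω, ENNReal.ofReal |(1 / (n : ℝ)) * ∑ i ∈ Finset.range n, X i k ω - p k| ∂P)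
        = ∫⁻ ω, ENNReal.ofReal (1/(n:ℝ)) * ENNReal.ofReal |T ω| ∂P := by
          apply lintegral_congr fun ω => ?_
          rw [hrw ω, ENNReal.ofReal_mul (by positivity)]
      _ = ENNReal.ofReal (1/(n:ℝ)) * ∫⁻ ω, ENNReal.ofReal |T ω| ∂P := by
          exact lintegral_const_mul _ (ENNReal.measurable_ofReal.comp hTmeas.abs)
      _ ≤ ENNReal.ofReal (1/(n:ℝ)) * ENNReal.ofReal (Real.sqrt n * Real.sqrt (q k)) := by
          gcongr
          have hcs := aux_cs P T hTmeas
          have hint : Integrable (fun ω => T ω ^ 2) P := by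
            simpa [Real.rpow_natCast] using hTmem.integrable_sq
          have heq : (∫⁻ ω, ENNReal.ofReal (T ω ^ 2) ∂P) = ENNReal.ofReal (∫ ω, T ω ^ 2 ∂P) :=
            (ofReal_integral_eq_lintegral_ofReal hint
              (ae_of_all _ fun ω => sq_nonneg _)).symm
          have hvareq : (∫ ω, T ω ^ 2 ∂P) = variance S P := by
            rw [variance_eq_integral hSmem.aemeasurable]
            have hm : ∫ x, S x ∂P = (n : ℝ) * p k := hsum_mean n k
            rw [hm]
          have hbd : (∫ ω, T ω ^ 2 ∂P) ≤ (n:ℝ) * q k := hvareq ▸ hvarsum n k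
          calc ∫⁻ ω, ENNReal.ofReal |T ω| ∂P
              ≤ (∫⁻ ω, ENNReal.ofReal (T ω ^ 2) ∂P) ^ (1/2 : ℝ) := hcs
            _ ≤ (ENNReal.ofReal ((n:ℝ) * q k)) ^ (1/2 : ℝ) := by
                rw [heq]
                exact ENNReal.rpow_le_rpow (ENNReal.ofReal_le_ofReal hbd) (by norm_num)
            _ = ENNReal.ofReal (Real.sqrt n * Real.sqrt (q k)) := by
                rw [ENNReal.ofReal_rpow_of_nonneg (mul_nonneg (le_of_lt hn0) (hq0 k)) (by norm_num)]
                congr 1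
                rw [← Real.sqrt_eq_rpow, Real.sqrt_mul (by positivity)]
      _ = ENNReal.ofReal ((1/(n:ℝ)) * (Real.sqrt n * Real.sqrt (q k))) := by
          rw [ENNReal.ofReal_mul (by positivity : (0:ℝ) ≤ 1/(n:ℝ)),
            ENNReal.ofReal_mul (Real.sqrt_nonneg _)]
  -- tail bound
  set M : ℝ := ∫ ω, (D 0 ω : ℝ) ^ (2 + ε) ∂P with hMdef
  have hM0 : 0 ≤ M := integral_nonneg fun ω => Real.rpow_nonneg (Nat.cast_nonneg _) _
  have htail : ∀ k : ℕ, q k ≤ M / ((k + 1 : ℝ) ^ (2 + ε)) := by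
    intro k
    have hms : MeasurableSet {ω' | D 0 ω' ≤ k} :=
      (hmeas 0) (MeasurableSet.of_discrete (s := {m : ℕ | m ≤ k}))
    have hqk : ENNReal.ofReal (q k) ≤ P ({ω' | D 0 ω' ≤ k}ᶜ) := by
      rw [measure_compl hms (measure_ne_top _ _), measure_univ]
      have : ENNReal.ofReal (q k) = 1 - ENNReal.ofReal (p k) := by
        rw [hqdef]
        simp only []
        rw [ENNReal.ofReal_sub _ (hp0 k), ENNReal.ofReal_one]
      rw [this, hpdef]
      simp only []
      rw [ENNReal.ofReal_toReal (measure_ne_top _ _)]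
    have hpow_pos : (0:ℝ) < (k + 1 : ℝ) ^ (2 + ε) :=
      Real.rpow_pos_of_pos (by positivity) _
    have hsub : ({ω' | D 0 ω' ≤ k}ᶜ : Set Ω) ⊆
        {ω | ENNReal.ofReal ((k + 1 : ℝ) ^ (2 + ε))
          ≤ ENNReal.ofReal ((D 0 ω : ℝ) ^ (2 + ε))} := by
      intro ω hω
      simp only [Set.mem_compl_iff, Set.mem_setOf_eq, not_le] at hω ⊢
      apply ENNReal.ofReal_le_ofReal
      apply Real.rpow_le_rpow (by positivity) _ (by linarith)
      have : (k + 1 : ℕ) ≤ D 0 ω := hω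
      exact_mod_cast Nat.cast_le.mpr this
    have hlint : ∫⁻ ω, ENNReal.ofReal ((D 0 ω : ℝ) ^ (2 + ε)) ∂P = ENNReal.ofReal M :=
      (ofReal_integral_eq_lintegral_ofReal hmom
        (ae_of_all _ fun ω => Real.rpow_nonneg (Nat.cast_nonneg _) _)).symm
    have hmarkov := meas_ge_le_lintegral_div (μ := P)
      ((ENNReal.measurable_ofReal.comp
        ((measurable_from_top (f := fun m : ℕ => ((m:ℝ)) ^ (2+ε))).comp (hmeas 0))).aemeasurable)
      (ε := ENNReal.ofReal ((k + 1 : ℝ) ^ (2 + ε)))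
      (by simp [ENNReal.ofReal_eq_zero, not_le, hpow_pos]) ENNReal.ofReal_ne_top
    have hchain : ENNReal.ofReal (q k) ≤ ENNReal.ofReal (M / (k + 1 : ℝ) ^ (2 + ε)) := by
      refine hqk.trans ((measure_mono hsub).trans (hmarkov.trans ?_))
      have : ∫⁻ (a : Ω), (ENNReal.ofReal ∘ (fun m : ℕ => (m:ℝ) ^ (2 + ε)) ∘ D 0) a ∂P
          = ENNReal.ofReal M := hlint
      rw [this, ENNReal.ofReal_div_of_pos hpow_pos]
    have := (ENNReal.ofReal_le_ofReal_iff (by positivity)).mp hchain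
    linarith [this, hq0 k]
  -- summability of sqrt tails
  have hsummu : Summable (fun k : ℕ => Real.sqrt M * (((k:ℝ) + 1) ^ (1 + ε/2))⁻¹) := by
    apply Summable.mul_left
    have h1 : Summable (fun n : ℕ => 1 / (n:ℝ) ^ (1 + ε/2)) :=
      Real.summable_one_div_nat_rpow.mpr (by linarith)
    have h2 := (summable_nat_add_iff 1).mpr h1
    apply h2.congr
    intro k
    push_cast
    rw [one_div]
  have hsqle : ∀ k : ℕ, Real.sqrt (q k) ≤ Real.sqrt M * (((k:ℝ) + 1) ^ (1 + ε/2))⁻¹ := by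
    intro k
    have h1 : Real.sqrt (q k) ≤ Real.sqrt (M / (k + 1 : ℝ) ^ (2 + ε)) :=
      Real.sqrt_le_sqrt (htail k)
    refine h1.trans_eq ?_
    rw [Real.sqrt_div hM0, div_eq_mul_inv]
    congr 2
    rw [Real.sqrt_eq_rpow, ← Real.rpow_mul (by positivity)]
    congr 1
    ring
  have hsq_summ : Summable fun k : ℕ => Real.sqrt (q k) :=
    Summable.of_nonneg_of_le (fun k => Real.sqrt_nonneg _) hsqle hsummu
  set C : ℝ := ∑' k, Real.sqrt (q k) with hCdef
  have hC0 : 0 ≤ C := tsum_nonneg fun k => Real.sqrt_nonneg _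
  -- the ENNReal-valued tsum
  set E : ℕ → Ω → ℝ≥0∞ := fun n ω => ∑' k, ENNReal.ofReal
    |(1 / (n : ℝ)) * ∑ i ∈ Finset.range n, (if D i ω ≤ k then (1:ℝ) else 0) - p k| with hEdef
  have hterm_meas : ∀ n k : ℕ, Measurable fun ω =>
      ENNReal.ofReal |(1 / (n : ℝ)) * ∑ i ∈ Finset.range n,
        (if D i ω ≤ k then (1:ℝ) else 0) - p k| := by
    intro n k
    apply ENNReal.measurable_ofReal.comp
    apply Measurable.abs
    apply Measurable.sub _ measurable_const
    exact (Finset.measurable_sum _ fun i _ => hXmeas i k).const_mul _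
  have hEmeas : ∀ n, Measurable (E n) := fun n => Measurable.ennreal_tsum fun k => hterm_meas n k
  set b : ℕ → ℝ := fun n => (n:ℝ) ^ δ' * ((1/(n:ℝ)) * Real.sqrt n) * C with hbdef
  have hb0 : ∀ n, 0 ≤ b n := fun n =>
    mul_nonneg (mul_nonneg (Real.rpow_nonneg (Nat.cast_nonneg _) _)
      (mul_nonneg (by positivity) (Real.sqrt_nonneg _))) hC0
  have hEbound : ∀ n : ℕ, 1 ≤ n →
      ∫⁻ ω, ENNReal.ofReal ((n:ℝ)^δ') * E n ω ∂P ≤ ENNReal.ofReal (b n) := by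
    intro n hn
    rw [lintegral_const_mul _ (hEmeas n)]
    have hEint : ∫⁻ ω, E n ω ∂P = ∑' k, ∫⁻ ω, ENNReal.ofReal
        |(1 / (n : ℝ)) * ∑ i ∈ Finset.range n,
          (if D i ω ≤ k then (1:ℝ) else 0) - p k| ∂P := by
      rw [hEdef]
      exact lintegral_tsum fun k => (hterm_meas n k).aemeasurable
    rw [hEint]
    calc ENNReal.ofReal ((n:ℝ)^δ') * ∑' k, ∫⁻ ω, ENNReal.ofReal
          |(1 / (n : ℝ)) * ∑ i ∈ Finset.range n,
            (if D i ω ≤ k then (1:ℝ) else 0) - p k| ∂P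
        ≤ ENNReal.ofReal ((n:ℝ)^δ') *
            ∑' k, ENNReal.ofReal ((1/(n:ℝ)) * (Real.sqrt n * Real.sqrt (q k))) := by
          gcongr with k
          exact hkey n hn k
      _ = ENNReal.ofReal ((n:ℝ)^δ') *
            (ENNReal.ofReal ((1/(n:ℝ)) * Real.sqrt n) * ENNReal.ofReal C) := by
          congr 1
          rw [hCdef, ENNReal.ofReal_tsum_of_nonneg (fun k => Real.sqrt_nonneg _) hsq_summ,
            ← ENNReal.tsum_mul_left]
          apply tsum_congr fun k => ?_
          rw [← ENNReal.ofReal_mul (by positivity), mul_assoc]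
      _ = ENNReal.ofReal (b n) := by
          rw [hbdef]
          simp only []
          rw [ENNReal.ofReal_mul (mul_nonneg (Real.rpow_nonneg (Nat.cast_nonneg _) _)
            (mul_nonneg (by positivity) (Real.sqrt_nonneg _))),
            ENNReal.ofReal_mul (Real.rpow_nonneg (Nat.cast_nonneg _) _), mul_assoc]
  -- conclude
  rw [tendstoInMeasure_iff_dist]
  intro c hc
  have hblim : Tendsto (fun n : ℕ => ENNReal.ofReal (b n / c)) atTop (𝓝 0) := by
    have h1 : Tendsto (fun n : ℕ => (n:ℝ) ^ (δ' - 1/2)) atTop (𝓝 0) := by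
      have h0 := (tendsto_rpow_neg_atTop (show 0 < 1/2 - δ' by linarith)).comp
        (tendsto_natCast_atTop_atTop (R := ℝ))
      simpa [Function.comp_def, neg_sub] using h0
    have h2 : Tendsto (fun n : ℕ => (n:ℝ) ^ (δ' - 1/2) * (C / c)) atTop (𝓝 0) := by
      simpa using h1.mul_const (C / c)
    have h3 : Tendsto (fun n : ℕ => b n / c) atTop (𝓝 0) := by
      apply h2.congr'
      filter_upwards [eventually_ge_atTop 1] with n hn
      have hn0 : (0:ℝ) < n := by exact_mod_cast hn
      have e1 : (1/(n:ℝ)) * Real.sqrt n = (n:ℝ) ^ (-(1/2) : ℝ) := by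
        rw [Real.sqrt_eq_rpow, show (-(1/2) : ℝ) = 1/2 - 1 by norm_num,
          Real.rpow_sub hn0, Real.rpow_one]
        ring
      have e2 : (n:ℝ) ^ δ' * ((n:ℝ) ^ (-(1/2) : ℝ)) = (n:ℝ) ^ (δ' - 1/2) := by
        rw [← Real.rpow_add hn0]
        congr 1
      rw [hbdef]
      simp only []
      rw [e1, e2]
      ring
    have := ENNReal.tendsto_ofReal h3
    simpa using this
  refine tendsto_of_tendsto_of_tendsto_of_le_of_le' tendsto_const_nhds hblim
    (Eventually.of_forall fun n => zero_le) ?_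
  filter_upwards [eventually_ge_atTop 1] with n hn
  have hsubset : {ω | c ≤ dist ((n : ℝ) ^ δ' *
      ∑' k : ℕ, |(1 / (n : ℝ)) * ∑ i ∈ Finset.range n,
        (if D i ω ≤ k then (1 : ℝ) else 0) - p k|) 0}
      ⊆ {ω | ENNReal.ofReal c ≤ ENNReal.ofReal ((n:ℝ)^δ') * E n ω} := by
    intro ω hω
    simp only [Set.mem_setOf_eq] at hω ⊢
    have hnn : (0:ℝ) ≤ (n : ℝ) ^ δ' * ∑' k : ℕ, |(1 / (n : ℝ)) * ∑ i ∈ Finset.range n,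
        (if D i ω ≤ k then (1 : ℝ) else 0) - p k| :=
      mul_nonneg (Real.rpow_nonneg (Nat.cast_nonneg _) _) (tsum_nonneg fun k => abs_nonneg _)
    rw [dist_zero_right, Real.norm_eq_abs, abs_of_nonneg hnn] at hω
    have hEt : (∑' k : ℕ, |(1 / (n : ℝ)) * ∑ i ∈ Finset.range n,
        (if D i ω ≤ k then (1 : ℝ) else 0) - p k|) = (E n ω).toReal := by
      rw [hEdef]
      exact aux_tsum_toReal fun k => abs_nonneg _
    calc ENNReal.ofReal c
        ≤ ENNReal.ofReal ((n : ℝ) ^ δ' * ∑' k : ℕ, |(1 / (n : ℝ)) * ∑ i ∈ Finset.range n,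
            (if D i ω ≤ k then (1 : ℝ) else 0) - p k|) := ENNReal.ofReal_le_ofReal hω
      _ = ENNReal.ofReal ((n:ℝ)^δ') * ENNReal.ofReal ((E n ω).toReal) := by
          rw [hEt, ENNReal.ofReal_mul (Real.rpow_nonneg (Nat.cast_nonneg _) _)]
      _ ≤ ENNReal.ofReal ((n:ℝ)^δ') * E n ω :=
          mul_le_mul_right ENNReal.ofReal_toReal_le _
  calc P {ω | c ≤ dist ((n : ℝ) ^ δ' *
        ∑' k : ℕ, |(1 / (n : ℝ)) * ∑ i ∈ Finset.range n,
          (if D i ω ≤ k then (1 : ℝ) else 0) - p k|) 0}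
      ≤ P {ω | ENNReal.ofReal c ≤ ENNReal.ofReal ((n:ℝ)^δ') * E n ω} := measure_mono hsubset
    _ ≤ (∫⁻ ω, ENNReal.ofReal ((n:ℝ)^δ') * E n ω ∂P) / ENNReal.ofReal c :=
        meas_ge_le_lintegral_div ((hEmeas n).const_mul _).aemeasurable
          (ENNReal.ofReal_pos.mpr hc).ne' ENNReal.ofReal_ne_top
    _ ≤ ENNReal.ofReal (b n) / ENNReal.ofReal c := ENNReal.div_le_div_right (hEbound n hn) _
    _ = ENNReal.ofReal (b n / c) := (ENNReal.ofReal_div_of_pos hc).symm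
end
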